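/- Let A be a nondegenerate finite quadratic form of level N, i.e. N is the smallest positive integer with N·q(γ) = 0 in ℚ/ℤ for all γ ∈ A. Let c be an integer such that gcd(c,N) is a Hall divisor of N, i.e. gcd(c,N) and h := N/gcd(c,N) are coprime. Then A^{c*} = cA = A_h = {α ∈ A : hα = 0}; in particular every element of A^{c*} has order dividing h. -/

import Mathlib

/-- Let `A` be a nondegenerate finite quadratic form of level `N`
(the smallest positive integer with `N q(γ) = 0` for all `γ`), and let `c` be an integer
such that `gcd(c, N)` is a Hall divisor of `N`, i.e. `gcd(c, N)` and `h = N / gcd(c, N)`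
are coprime.  Then `A^{c*} = cA = A_h`; in particular every element of `A^{c*}` has
order dividing `h`. -/
theorem cStar_eq_smul_eq_torsion_of_hall
    {A : Type*} [AddCommGroup A] [Fintype A]
    (q : A → AddCircle (1 : ℚ))
    (hq : ∀ (k : ℤ) (γ : A), q (k • γ) = k ^ 2 • q γ)
    (b : A → A → AddCircle (1 : ℚ))
    (hb : ∀ γ δ : A, b γ δ = q (γ + δ) - q γ - q δ)
    (hb_add_left : ∀ γ₁ γ₂ δ : A, b (γ₁ + γ₂) δ = b γ₁ δ + b γ₂ δ)
    (hb_add_right : ∀ γ δ₁ δ₂ : A, b γ (δ₁ + δ₂) = b γ δ₁ + b γ δ₂)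
    (hnd : Function.Injective (fun δ : A => fun γ : A => b γ δ))
    (N : ℕ) (hN : 0 < N)
    (hlevel : ∀ γ : A, (N : ℤ) • q γ = 0)
    (hmin : ∀ m : ℕ, 0 < m → (∀ γ : A, (m : ℤ) • q γ = 0) → N ≤ m)
    (c : ℤ) (hHall : Nat.Coprime (Int.gcd c (N : ℤ)) (N / Int.gcd c (N : ℤ))) :
    {δ : A | ∀ γ : A, c • γ = 0 → b γ δ = c • q γ} = {δ : A | ∃ γ : A, c • γ = δ} ∧
    {δ : A | ∃ γ : A, c • γ = δ} =
      {α : A | ((N / Int.gcd c (N : ℤ) : ℕ) : ℤ) • α = 0} := by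
  set d : ℕ := Int.gcd c (N : ℤ) with hd
  set h : ℕ := N / d with hh
  -- bilinearity with integer scalars
  have hbL : ∀ (δ : A) (k : ℤ) (γ : A), b (k • γ) δ = k • b γ δ := fun δ k γ =>
    map_zsmul (AddMonoidHom.mk' (fun γ => b γ δ) (fun a a' => hb_add_left a a' δ)) k γ
  have hbR : ∀ (γ : A) (k : ℤ) (δ : A), b γ (k • δ) = k • b γ δ := fun γ k δ =>
    map_zsmul (AddMonoidHom.mk' (fun δ => b γ δ) (fun a a' => hb_add_right γ a a')) k δ
  have hb0R : ∀ γ : A, b γ 0 = 0 := fun γ =>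
    map_zero (AddMonoidHom.mk' (fun δ => b γ δ) (fun a a' => hb_add_right γ a a'))
  have hb0L : ∀ δ : A, b 0 δ = 0 := fun δ =>
    map_zero (AddMonoidHom.mk' (fun γ => b γ δ) (fun a a' => hb_add_left a a' δ))
  -- N kills b
  have hNb : ∀ γ δ : A, (N : ℤ) • b γ δ = 0 := by
    intro γ δ
    rw [hb, smul_sub, smul_sub, hlevel, hlevel, hlevel]
    simp
  -- N kills A
  have hNA : ∀ γ : A, (N : ℤ) • γ = 0 := by
    intro γ
    apply hnd
    funext γ'
    show b γ' ((N : ℤ) • γ) = b γ' 0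
    rw [hbR, hNb, hb0R]
  have hdc : (d : ℤ) ∣ c := Int.gcd_dvd_left c (N : ℤ)
  have hdN : (d : ℤ) ∣ (N : ℤ) := Int.gcd_dvd_right c (N : ℤ)
  have hdNn : d ∣ N := by exact_mod_cast hdN
  have hdh : d * h = N := Nat.mul_div_cancel' hdNn
  have hhN : h ∣ N := ⟨d, by rw [mul_comm]; exact hdh.symm⟩
  obtain ⟨e, he⟩ := hdc
  -- q 0 = 0
  have hq0 : q 0 = 0 := by
    have := hq 0 0
    simpa using this
  -- if c • γ = 0 then d • q γ = 0
  have hqd : ∀ γ : A, c • γ = 0 → (d : ℤ) • q γ = 0 := by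
    intro γ hγ
    -- first d • γ = 0 by Bezout
    have hbez := Int.gcd_eq_gcd_ab c (N : ℤ)
    have hdγ : (d : ℤ) • γ = 0 := by
      rw [hd, hbez, add_smul, mul_comm c, mul_comm (N : ℤ), mul_smul, mul_smul,
        hγ, hNA, smul_zero, smul_zero, add_zero]
    -- d^2 • q γ = 0
    have hd2 : ((d : ℤ) ^ 2) • q γ = 0 := by
      have := hq (d : ℤ) γ
      rw [hdγ, hq0] at this
      exact this.symm
    -- gcd (d^2) N = d, so d • q γ = 0
    have hgcd : Nat.gcd (d * d) N = d := by
      rw [← hdh, Nat.gcd_mul_left, hHall, mul_one]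
    have hbez2 := Nat.gcd_eq_gcd_ab (d * d) N
    have : ((Nat.gcd (d * d) N : ℤ)) • q γ = 0 := by
      rw [hbez2, add_smul, mul_comm, mul_comm ((N : ℤ)), mul_smul, mul_smul]
      have hdd : ((d * d : ℕ) : ℤ) • q γ = 0 := by
        push_cast
        rw [← sq]; exact hd2
      rw [hdd, hlevel, smul_zero, smul_zero, add_zero]
    rw [hgcd] at this
    exact this
  -- (ii)+(iv) key:  cA ⊆ A_h
  have hdhZ : (d : ℤ) * (h : ℤ) = (N : ℤ) := by exact_mod_cast congrArg (Nat.cast : ℕ → ℤ) hdh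
  have hS2S3 : ∀ ε : A, (h : ℤ) • (c • ε) = 0 := by
    intro ε
    rw [smul_smul, he, ← mul_assoc, mul_comm ((h : ℤ)) ((d : ℤ)), hdhZ, mul_smul, hNA]
  -- (ii) A^{c*} ⊆ A_h
  have hS1S3 : ∀ δ : A, (∀ γ : A, c • γ = 0 → b γ δ = c • q γ) → (h : ℤ) • δ = 0 := by
    intro δ hδ
    apply hnd
    funext γ
    show b γ ((h : ℤ) • δ) = b γ 0
    rw [hbR, hb0R]
    have h1 : c • ((h : ℤ) • γ) = 0 := by
      rw [smul_smul, mul_comm, ← smul_smul]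
      exact hS2S3 γ
    have h2 := hδ ((h : ℤ) • γ) h1
    rw [hq ((h : ℤ)) γ] at h2
    rw [hbL] at h2
    rw [h2, smul_smul]
    have hcc : c * (h : ℤ) ^ 2 = (e * (h : ℤ)) * (N : ℤ) := by
      rw [he, ← hdhZ]; ring
    rw [hcc, mul_smul, hlevel, smul_zero]
  -- (iii) A_h ⊆ cA : gcd(c, h) = 1
  have hunfold : ∀ m : ℕ, Int.gcd c (m : ℤ) = Nat.gcd c.natAbs m := by
    intro m; simp [Int.gcd]
  have hgch : Int.gcd c (h : ℤ) = 1 := by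
    have h2 : Int.gcd c (h : ℤ) ∣ h := by rw [hunfold]; exact Nat.gcd_dvd_right _ _
    have h1 : Int.gcd c (h : ℤ) ∣ d := by
      rw [hd, hunfold, hunfold]
      exact Nat.dvd_gcd (Nat.gcd_dvd_left _ _) ((Nat.gcd_dvd_right _ _).trans hhN)
    have := Nat.dvd_gcd h1 h2
    rw [hHall] at this
    exact Nat.eq_one_of_dvd_one this
  have hS3S2 : ∀ α : A, (h : ℤ) • α = 0 → ∃ γ : A, c • γ = α := by
    intro α hα
    refine ⟨Int.gcdA c (h : ℤ) • α, ?_⟩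
    have hbez := Int.gcd_eq_gcd_ab c ((h : ℤ))
    rw [hgch] at hbez
    have : ((1 : ℤ)) • α = α := one_smul _ _
    calc c • (Int.gcdA c (h : ℤ) • α) = (c * Int.gcdA c (h : ℤ)) • α := (mul_smul _ _ _).symm
      _ = (c * Int.gcdA c (h : ℤ)) • α + (Int.gcdB c (h : ℤ)) • ((h : ℤ) • α) := by
          rw [hα, smul_zero, add_zero]
      _ = (c * Int.gcdA c (h : ℤ) + (h : ℤ) * Int.gcdB c (h : ℤ)) • α := by
          rw [add_smul, smul_smul, mul_comm (Int.gcdB c (h : ℤ))]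
      _ = ((1 : ℤ)) • α := by rw [← hbez]; norm_cast
      _ = α := one_smul _ _
  -- (i) cA ⊆ A^{c*}
  have hS2S1 : ∀ (ε : A) (γ : A), c • γ = 0 → b γ (c • ε) = c • q γ := by
    intro ε γ hγ
    rw [hbR, ← hbL, hγ, hb0L]
    rw [he, mul_comm (d : ℤ) e, mul_smul, hqd γ hγ, smul_zero]
  constructor
  · ext δ
    simp only [Set.mem_setOf_eq]
    constructor
    · intro hδ
      exact hS3S2 δ (hS1S3 δ hδ)
    · rintro ⟨ε, rfl⟩ γ hγ
      exact hS2S1 ε γ hγ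
  · ext α
    simp only [Set.mem_setOf_eq]
    constructor
    · rintro ⟨ε, rfl⟩
      exact hS2S3 ε
    · exact hS3S2 α
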